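/- arXiv:2410.16279 — 2 statements merged into one kernel-verified Lean document; each statement's English description precedes it below -/
import Mathlib

section
/- Let R be a commutative ring with unity, G = ⟨x | x^n = 1⟩ a cyclic group of order n, v ∈ {0, 1, …, n−1}, d = gcd(v,n) (with the convention gcd(0,n) = n), and m = n/d. Then for every element γ = Σ_{i=0}^{n−1} c_i x^i of RG (c_i ∈ R), the equation (Σ_{i=0}^{n−1} x^{iv})·γ = 0 holds in RG if and only if d·(Σ_{j=0}^{m−1} c_{i+jd}) = 0 in R for every i ∈ {0, 1, …, d−1}. -/
/-- The generator `x` of the cyclic group of order `n`, viewed inside the group ring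
`R[Multiplicative (ZMod n)]`. -/
noncomputable def xgen (R : Type*) [CommRing R] (n : ℕ) :
    MonoidAlgebra R (Multiplicative (ZMod n)) :=
  MonoidAlgebra.of R (Multiplicative (ZMod n)) (Multiplicative.ofAdd (1 : ZMod n))

lemma sum_range_zmod {M : Type*} [AddCommMonoid M] (n : ℕ) [NeZero n] (g : ZMod n → M) :
    ∑ i ∈ Finset.range n, g (i : ZMod n) = ∑ i : ZMod n, g i := by
  refine Finset.sum_nbij' (fun i => (i : ZMod n)) (fun i => i.val) (by simp)
    (fun i _ => Finset.mem_range.mpr (ZMod.val_lt i)) (fun i hi => ?_)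
    (fun i _ => ZMod.natCast_zmod_val i) (fun i _ => rfl)
  exact ZMod.val_cast_of_lt (Finset.mem_range.mp hi)

lemma xgen_pow {R : Type*} [CommRing R] (n k : ℕ) :
    xgen R n ^ k = MonoidAlgebra.single (Multiplicative.ofAdd ((k : ZMod n))) 1 := by
  unfold xgen
  rw [← map_pow, ← ofAdd_nsmul, nsmul_eq_mul, mul_one, MonoidAlgebra.of_apply]

lemma gamma_apply {R : Type*} [CommRing R] (n : ℕ) [NeZero n] (c : ZMod n → R) (s : ZMod n) :
    (∑ i : ZMod n, c i • xgen R n ^ i.val).coeff (Multiplicative.ofAdd s) = c s := by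
  simp only [xgen_pow, ZMod.natCast_zmod_val, MonoidAlgebra.coeff_sum, MonoidAlgebra.coeff_smul, Finsupp.smul_apply,
    Finsupp.single_apply]
  rw [Finset.sum_apply']
  simp [Finsupp.single_apply]

lemma prod_coeff {R : Type*} [CommRing R] (n v : ℕ) [NeZero n] (c : ZMod n → R) (t : ZMod n) :
    ((∑ i ∈ Finset.range n, xgen R n ^ (i * v)) * (∑ i : ZMod n, c i • xgen R n ^ i.val)).coeff
      (Multiplicative.ofAdd t)
      = ∑ i ∈ Finset.range n, c (t - ((i * v : ℕ) : ZMod n)) := by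
  rw [Finset.sum_mul, MonoidAlgebra.coeff_sum, Finset.sum_apply']
  refine Finset.sum_congr rfl fun i _ => ?_
  rw [xgen_pow, MonoidAlgebra.coeff_single_mul_apply, one_mul]
  have : (Multiplicative.ofAdd ((i * v : ℕ) : ZMod n))⁻¹ * Multiplicative.ofAdd t
      = Multiplicative.ofAdd (t - ((i * v : ℕ) : ZMod n)) := by
    simp [← ofAdd_neg, ← ofAdd_add, sub_eq_add_neg, add_comm]
  rw [this, gamma_apply]

lemma coeff_lemma {R : Type*} [CommRing R] (n v : ℕ) [NeZero n] (c : ZMod n → R) :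
    ((∑ i ∈ Finset.range n, xgen R n ^ (i * v)) * (∑ i : ZMod n, c i • xgen R n ^ i.val) = 0)
    ↔ ∀ t : ZMod n, ∑ i ∈ Finset.range n, c (t - ((i * v : ℕ) : ZMod n)) = 0 := by
  constructor
  · intro h t
    rw [← prod_coeff n v c t, h]
    rfl
  · intro h
    apply MonoidAlgebra.ext
    apply Finsupp.ext
    intro a
    have := h a.toAdd
    rw [← prod_coeff n v c a.toAdd] at this
    exact this

lemma sum_range_mul_decomp {M : Type*} [AddCommMonoid M] (F : ℕ → M) (d m : ℕ) :
    ∑ i ∈ Finset.range (d * m), F i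
      = ∑ k ∈ Finset.range d, ∑ j ∈ Finset.range m, F (k * m + j) := by
  induction d with
  | zero => simp
  | succ d ih =>
    rw [Nat.succ_mul, Finset.sum_range_add, ih, Finset.sum_range_succ]

lemma lemA {M : Type*} [AddCommMonoid M] (n v d m : ℕ) (hdv : d ∣ v) (hn : n = d * m)
    (f : ZMod n → M) :
    ∑ i ∈ Finset.range n, f ((i * v : ℕ) : ZMod n)
      = d • ∑ j ∈ Finset.range m, f ((j * v : ℕ) : ZMod n) := by
  subst hn
  have hmv : ((m * v : ℕ) : ZMod (d * m)) = 0 := by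
    obtain ⟨w, rfl⟩ := hdv
    have h : m * (d * w) = d * m * w := by ring
    rw [h, Nat.cast_mul, ZMod.natCast_self, zero_mul]
  rw [sum_range_mul_decomp (fun i => f ((i * v : ℕ) : ZMod (d * m))) d m]
  have h2 : ∀ k ∈ Finset.range d,
      (∑ j ∈ Finset.range m, f (((k * m + j) * v : ℕ) : ZMod (d * m)))
        = ∑ j ∈ Finset.range m, f ((j * v : ℕ) : ZMod (d * m)) := by
    intro k _
    refine Finset.sum_congr rfl fun j _ => ?_
    congr 1
    have h3 : (k * m + j) * v = k * (m * v) + j * v := by ring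
    rw [h3, Nat.cast_add, Nat.cast_mul, hmv, mul_zero, zero_add]
  rw [Finset.sum_congr rfl h2, Finset.sum_const, Finset.card_range]

lemma lemB {M : Type*} [AddCommMonoid M] (n v : ℕ) [NeZero n] (f : ZMod n → M) :
    ∑ j ∈ Finset.range (n / Nat.gcd v n), f ((j * v : ℕ) : ZMod n)
      = ∑ j ∈ Finset.range (n / Nat.gcd v n), f ((j * Nat.gcd v n : ℕ) : ZMod n) := by
  have hn0 : 0 < n := Nat.pos_of_ne_zero (NeZero.ne n)
  set d := Nat.gcd v n with hd
  set m := n / d with hmdef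
  have hd0 : 0 < d := Nat.gcd_pos_of_pos_right v hn0
  have hm0 : 0 < m := Nat.div_pos (Nat.le_of_dvd hn0 (Nat.gcd_dvd_right v n)) hd0
  haveI : NeZero m := ⟨hm0.ne'⟩
  set w := v / d with hw
  have hv : v = w * d := (Nat.div_mul_cancel (Nat.gcd_dvd_left v n)).symm
  have hn : n = m * d := (Nat.div_mul_cancel (Nat.gcd_dvd_right v n)).symm
  have hcop : Nat.Coprime w m := Nat.coprime_div_gcd_div_gcd hd0
  have key : ∀ a b : ℕ, (a : ZMod m) = (b : ZMod m) →
      ((a * d : ℕ) : ZMod n) = ((b * d : ℕ) : ZMod n) := by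
    intro a b h
    rw [ZMod.natCast_eq_natCast_iff] at h ⊢
    rw [hn]
    exact h.mul_right' d
  set g : ZMod m → M := fun y => f ((y.val * d : ℕ) : ZMod n) with hg
  have h1 : ∀ j : ℕ, f ((j * v : ℕ) : ZMod n) = g ((j : ZMod m) * (w : ZMod m)) := by
    intro j
    have e1 : ((((j : ZMod m) * (w : ZMod m)).val : ℕ) : ZMod m) = ((j * w : ℕ) : ZMod m) := by
      push_cast [ZMod.natCast_zmod_val]
      ring
    have := key _ _ e1
    simp only [hg]
    rw [this]
    congr 1
    rw [hv]
    push_cast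
    ring
  have h2 : ∀ j : ℕ, j < m → f ((j * d : ℕ) : ZMod n) = g ((j : ZMod m)) := by
    intro j hj
    simp only [hg]
    congr 2
    rw [ZMod.val_cast_of_lt hj]
  calc ∑ j ∈ Finset.range m, f ((j * v : ℕ) : ZMod n)
      = ∑ j ∈ Finset.range m, g ((j : ZMod m) * (w : ZMod m)) :=
        Finset.sum_congr rfl fun j _ => h1 j
    _ = ∑ y : ZMod m, g (y * (w : ZMod m)) := sum_range_zmod m (fun y => g (y * (w : ZMod m)))
    _ = ∑ y : ZMod m, g y := by
        rw [← ZMod.coe_unitOfCoprime w hcop]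
        exact Fintype.sum_bijective _ (Units.mulRight_bijective (ZMod.unitOfCoprime w hcop)) _ _
          (fun y => rfl)
    _ = ∑ j ∈ Finset.range m, g ((j : ZMod m)) := (sum_range_zmod m g).symm
    _ = ∑ j ∈ Finset.range m, f ((j * d : ℕ) : ZMod n) :=
        Finset.sum_congr rfl fun j hj => (h2 j (Finset.mem_range.mp hj)).symm

lemma lemF {M : Type*} [AddCommMonoid M] (n d m : ℕ) [NeZero n] (hn : n = m * d)
    (c : ZMod n → M) (t : ZMod n) :
    ∑ j ∈ Finset.range m, c (t - ((j * d : ℕ) : ZMod n))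
      = ∑ j ∈ Finset.range m, c ((t.val % d + j * d : ℕ) : ZMod n) := by
  have hm0 : m ≠ 0 := by
    rintro rfl
    exact NeZero.ne n (by simpa using hn)
  haveI : NeZero m := ⟨hm0⟩
  set i := t.val % d with hi
  set q := t.val / d with hq
  have ht : t = ((i + d * q : ℕ) : ZMod n) := by
    rw [hi, hq, Nat.mod_add_div, ZMod.natCast_zmod_val]
  have key : ∀ a b : ℕ, (a : ZMod m) = (b : ZMod m) →
      ((a * d : ℕ) : ZMod n) = ((b * d : ℕ) : ZMod n) := by
    intro a b h
    rw [ZMod.natCast_eq_natCast_iff] at h ⊢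
    rw [hn]
    exact h.mul_right' d
  set G : ZMod m → M := fun y => c (t - ((y.val * d : ℕ) : ZMod n)) with hG
  have hGval : ∀ y : ZMod m, G ((q : ZMod m) - y) = c ((i + y.val * d : ℕ) : ZMod n) := by
    intro y
    set u := (((q : ZMod m) - y).val) with hu
    have e1 : ((q * d : ℕ) : ZMod n) = (((y.val + u) * d : ℕ) : ZMod n) := by
      refine key _ _ ?_
      push_cast [hu, ZMod.natCast_zmod_val]
      ring
    simp only [hG]
    congr 1
    rw [ht]
    have e1' : (q : ZMod n) * (d : ZMod n)
        = ((y.val : ZMod n) + (u : ZMod n)) * (d : ZMod n) := by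
      have := e1
      push_cast at this
      exact this
    push_cast
    linear_combination e1'
  calc ∑ j ∈ Finset.range m, c (t - ((j * d : ℕ) : ZMod n))
      = ∑ j ∈ Finset.range m, G ((j : ZMod m)) := by
        refine Finset.sum_congr rfl fun j hj => ?_
        simp only [hG]
        rw [ZMod.val_cast_of_lt (Finset.mem_range.mp hj)]
    _ = ∑ y : ZMod m, G y := sum_range_zmod m G
    _ = ∑ y : ZMod m, G ((q : ZMod m) - y) :=
        (Fintype.sum_equiv (Equiv.subLeft (q : ZMod m)) _ G (fun y => rfl)).symm
    _ = ∑ y : ZMod m, c ((i + y.val * d : ℕ) : ZMod n) :=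
        Finset.sum_congr rfl fun y _ => hGval y
    _ = ∑ j ∈ Finset.range m, c ((i + j * d : ℕ) : ZMod n) := by
        refine (sum_range_zmod m (fun y => c ((i + y.val * d : ℕ) : ZMod n))).symm.trans ?_
        refine Finset.sum_congr rfl fun j hj => ?_
        rw [ZMod.val_cast_of_lt (Finset.mem_range.mp hj)]

/-- In the group ring of `⟨x | x^n = 1⟩`, for `γ = Σ c_i x^i`, `v < n`,
`d = gcd(v,n)` and `m = n/d`, one has `(Σ_{i=0}^{n−1} x^{iv}) γ = 0` iff
`d · (Σ_{j=0}^{m−1} c_{i+jd}) = 0` in `R` for every `i ∈ {0,…,d−1}`. -/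
theorem stmt11 {R : Type*} [CommRing R] (n v : ℕ) [NeZero n] (hv : v < n)
    (c : ZMod n → R) :
    (∑ i ∈ Finset.range n, xgen R n ^ (i * v)) * (∑ i : ZMod n, c i • xgen R n ^ i.val) = 0 ↔
    ∀ i : ℕ, i < Nat.gcd v n →
      Nat.gcd v n •
        (∑ j ∈ Finset.range (n / Nat.gcd v n), c ((i + j * Nat.gcd v n : ℕ) : ZMod n)) = 0 := by
  have hn0 : 0 < n := Nat.pos_of_ne_zero (NeZero.ne n)
  have hd0 : 0 < Nat.gcd v n := Nat.gcd_pos_of_pos_right v hn0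
  have hdn : Nat.gcd v n ≤ n := Nat.le_of_dvd hn0 (Nat.gcd_dvd_right v n)
  have hn : n = Nat.gcd v n * (n / Nat.gcd v n) :=
    (Nat.mul_div_cancel' (Nat.gcd_dvd_right v n)).symm
  have hn' : n = (n / Nat.gcd v n) * Nat.gcd v n :=
    (Nat.div_mul_cancel (Nat.gcd_dvd_right v n)).symm
  rw [coeff_lemma]
  have step : ∀ t : ZMod n,
      (∑ i ∈ Finset.range n, c (t - ((i * v : ℕ) : ZMod n)))
        = Nat.gcd v n • ∑ j ∈ Finset.range (n / Nat.gcd v n),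
            c ((t.val % Nat.gcd v n + j * Nat.gcd v n : ℕ) : ZMod n) := by
    intro t
    have h1 := lemA n v (Nat.gcd v n) (n / Nat.gcd v n) (Nat.gcd_dvd_left v n) hn
      (fun s => c (t - s))
    have h2 := lemB n v (fun s => c (t - s))
    have h3 := lemF n (Nat.gcd v n) (n / Nat.gcd v n) hn' c t
    simp only [] at h1 h2
    rw [h1, h2, h3]
  constructor
  · intro h i hid
    have := h ((i : ℕ) : ZMod n)
    rw [step] at this
    rwa [ZMod.val_cast_of_lt (lt_of_lt_of_le hid hdn), Nat.mod_eq_of_lt hid] at this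
  · intro h t
    rw [step]
    exact h (t.val % Nat.gcd v n) (Nat.mod_lt _ hd0)
end

section
/- Let R be a commutative ring with unity of characteristic 0, let n be a prime number, let G = ⟨x | x^n = 1⟩ be a cyclic group of order n, and let u, v ∈ {0, 1, …, n−1}; let σ, τ be the R-algebra endomorphisms of RG with σ(x) = x^u and τ(x) = x^{u+v}. Let D : RG → RG be an R-linear map with D(1) = 0 satisfying D(x^k) = (Σ_{i+j=k−1, i,j ≥ 0} σ(x)^i τ(x)^j)·D(x) for every k ∈ {1, 2, …, n−1}, and suppose that D(x) is a unit of the ring RG. Then D is not a (σ,τ)-derivation of RG (for any choice of u and v). -/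
lemma xgen_pow_n (R : Type*) [CommRing R] (n : ℕ) [NeZero n] : xgen R n ^ n = 1 := by
  rw [xgen, ← map_pow, ← ofAdd_nsmul]
  simp [nsmul_eq_mul, ZMod.natCast_self, MonoidAlgebra.one_def]

/-- Suppose `char R = 0` (i.e. `m·1 ≠ 0` for every positive integer `m`),
`n` is prime, `σ x = x^u`, `τ x = x^{u+v}` (`u, v < n`), and `D` is `R`-linear with
`D 1 = 0`, satisfies the relations (2.1), and `D x` is a unit of `RG`. Then `D` is not
a `(σ,τ)`-derivation. -/
theorem stmt15 {R : Type*} [CommRing R] (n u v : ℕ) [NeZero n]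
    (hchar : ∀ m : ℕ, 0 < m → (m : R) ≠ 0) (hp : n.Prime)
    (hu : u < n) (hv : v < n)
    (σ τ : MonoidAlgebra R (Multiplicative (ZMod n)) →ₐ[R] MonoidAlgebra R (Multiplicative (ZMod n)))
    (hσ : σ (xgen R n) = xgen R n ^ u) (hτ : τ (xgen R n) = xgen R n ^ (u + v))
    (D : MonoidAlgebra R (Multiplicative (ZMod n)) →ₗ[R] MonoidAlgebra R (Multiplicative (ZMod n)))
    (hD1 : D 1 = 0)
    (hrel : ∀ k : ℕ, 1 ≤ k → k ≤ n - 1 →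
      D (xgen R n ^ k) =
        (∑ p ∈ Finset.HasAntidiagonal.antidiagonal (k - 1), σ (xgen R n) ^ p.1 * τ (xgen R n) ^ p.2) *
          D (xgen R n))
    (hunit : IsUnit (D (xgen R n))) :
    ¬ (∀ a b, D (a * b) = D a * τ b + σ a * D b) := by
  intro hder
  set X := xgen R n with hX
  have hn2 : 2 ≤ n := hp.two_le
  have hXn : X ^ n = 1 := xgen_pow_n R n
  have hDxn : D (X ^ n) = 0 := by rw [hXn]; exact hD1
  have hsplit : X ^ n = X * X ^ (n - 1) := by
    rw [← pow_succ']
    congr 1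
    omega
  have hrel' := hrel (n - 1) (by omega) le_rfl
  set e : MonoidAlgebra R (Multiplicative (ZMod n)) :=
    ∑ p ∈ Finset.HasAntidiagonal.antidiagonal (n - 1), σ X ^ p.1 * τ X ^ p.2 with he_def
  have hid : e = τ X ^ (n - 1) +
      σ X * ∑ p ∈ Finset.HasAntidiagonal.antidiagonal (n - 1 - 1), σ X ^ p.1 * τ X ^ p.2 := by
    have h21 : n - 1 = (n - 2) + 1 := by omega
    have h22 : n - 1 - 1 = n - 2 := by omega
    rw [he_def, h22, h21, Finset.Nat.sum_antidiagonal_succ, Finset.mul_sum]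
    congr 1
    · simp
    · refine Finset.sum_congr rfl fun p _ => ?_
      rw [pow_succ']
      ring
  have key : e * D X = 0 := by
    have h1 : D (X * X ^ (n - 1)) = D X * τ (X ^ (n - 1)) + σ X * D (X ^ (n - 1)) :=
      hder _ _
    rw [← hsplit, hDxn, hrel', map_pow] at h1
    rw [hid]
    linear_combination -h1
  have he0 : e = 0 := by
    refine hunit.mul_right_cancel ?_
    rw [key, zero_mul]
  -- augmentation map
  set aug : MonoidAlgebra R (Multiplicative (ZMod n)) →ₐ[R] R :=
    MonoidAlgebra.lift R R (Multiplicative (ZMod n)) 1 with haug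
  have haugX : aug X = 1 := by
    rw [hX, xgen, haug, MonoidAlgebra.lift_of]
    rfl
  have haugσ : aug (σ X) = 1 := by rw [hσ, map_pow, haugX, one_pow]
  have haugτ : aug (τ X) = 1 := by rw [hτ, map_pow, haugX, one_pow]
  have hauge : aug e = (n : R) := by
    rw [he_def, map_sum]
    have : ∀ p ∈ Finset.HasAntidiagonal.antidiagonal (n - 1), aug (σ X ^ p.1 * τ X ^ p.2) = 1 := by
      intro p _
      rw [map_mul, map_pow, map_pow, haugσ, haugτ, one_pow, one_pow, one_mul]
    rw [Finset.sum_congr rfl this, Finset.sum_const, Finset.Nat.card_antidiagonal]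
    have : n - 1 + 1 = n := by omega
    rw [this, nsmul_eq_mul, mul_one]
  rw [he0, map_zero] at hauge
  exact hchar n (by omega) hauge.symm
end
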